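/- Let G be a finite group acting on a finite nonempty set X, let p be a prime, P a Sylow p-subgroup of G, and N = N_G(P) the normalizer of P in G. Then the number of G-orbits of X whose cardinality is coprime to p equals the number of N-orbits of X whose cardinality is coprime to p. -/

import Mathlib

open MulAction Subgroup

variable {p : ℕ} [Fact p.Prime]

theorem exists_sylow_le_of_coprime_index {K : Type*} [Group K] [Finite K]
    (H : Subgroup K) (h : p.Coprime H.index) : ∃ R : Sylow p K, (R : Subgroup K) ≤ H := by
  obtain ⟨Q⟩ : Nonempty (Sylow p H) := inferInstance
  obtain ⟨R, hQR⟩ := (Q.2.map H.subtype).exists_le_sylow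
  have hpd : ¬ p ∣ H.index := (Nat.Prime.coprime_iff_not_dvd Fact.out).mp h
  have hfact : (Nat.card K).factorization p = (Nat.card H).factorization p := by
    rw [← Subgroup.card_mul_index H, Nat.factorization_mul Nat.card_pos.ne'
      H.index_ne_zero_of_finite]
    simp [Nat.factorization_eq_zero_of_not_dvd hpd]
  have hcard : Nat.card ((Q : Subgroup H).map H.subtype) = Nat.card R := by
    rw [← Nat.card_congr ((Q : Subgroup H).equivMapOfInjective H.subtype
      H.subtype_injective).toEquiv]
    rw [show Nat.card (Q : Subgroup H) = Nat.card Q from rfl, Q.card_eq_multiplicity,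
      R.card_eq_multiplicity, hfact]
  have := Subgroup.eq_of_le_of_card_ge hQR hcard.ge
  exact ⟨R, this ▸ Subgroup.map_subtype_le _⟩

theorem sylow_le_of_coprime_index {K : Type*} [Group K] [Finite K] (Q : Sylow p K)
    (hn : (Q : Subgroup K).Normal) (H : Subgroup K) (h : p.Coprime H.index) :
    (Q : Subgroup K) ≤ H := by
  obtain ⟨R, hR⟩ := exists_sylow_le_of_coprime_index H h
  haveI := Q.unique_of_normal hn
  rwa [Subsingleton.elim Q R]

/-- Lemma 2.4: the number of `G`-orbits of `X` of cardinality coprime to `p` equals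
the number of `N = N_G(P)`-orbits of `X` of cardinality coprime to `p`. -/
theorem mckay_orbit_count {p : ℕ} [Fact p.Prime] {G : Type*} [Group G] [Fintype G]
    {X : Type*} [Fintype X] [Nonempty X] [MulAction G X] (P : Sylow p G) :
    Nat.card {ω : MulAction.orbitRel.Quotient G X // p.Coprime (Nat.card ω.orbit)}
      = Nat.card {ω : MulAction.orbitRel.Quotient (Subgroup.normalizer ((P : Subgroup G) : Set G)) X //
          p.Coprime (Nat.card ω.orbit)} := by
  classical
  set N := Subgroup.normalizer ((P : Subgroup G) : Set G) with hNdef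
  -- cardinality of orbits as indices of stabilizers
  have cardG : ∀ x : X, Nat.card (orbit G x) = (stabilizer G x).index := fun x => by
    rw [Nat.card_congr (orbitEquivQuotientStabilizer G x), Subgroup.index_eq_card]
  have cardN : ∀ x : X, Nat.card (orbit N x) = (stabilizer N x).index := fun x => by
    rw [Nat.card_congr (orbitEquivQuotientStabilizer N x), Subgroup.index_eq_card]
  have hPN : (P : Subgroup G) ≤ N := Subgroup.le_normalizer
  -- the Sylow subgroup of N
  let PN : Sylow p N := P.subtype hPN
  have hPNnormal : (PN : Subgroup N).Normal := by
    rw [Sylow.coe_subtype]; exact Subgroup.normal_in_normalizer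
  -- fact 1
  have fact1 : ∀ x : X, (P : Subgroup G) ≤ stabilizer G x →
      p.Coprime (Nat.card (orbit G x)) := by
    intro x hx
    rw [cardG]
    have hPind : p.Coprime (P : Subgroup G).index :=
      (Nat.Prime.coprime_iff_not_dvd Fact.out).mpr P.not_dvd_index
    exact Nat.Coprime.coprime_dvd_right (Subgroup.index_dvd_of_le hx) hPind
  -- fact 2
  have fact2 : ∀ x : X, (P : Subgroup G) ≤ stabilizer G x →
      p.Coprime (Nat.card (orbit N x)) := by
    intro x hx
    rw [cardN]
    have hle : (PN : Subgroup N) ≤ stabilizer N x := by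
      rw [Sylow.coe_subtype]
      intro n hn
      exact (show n • x = x from hx hn)
    have hPNind : p.Coprime (PN : Subgroup N).index :=
      (Nat.Prime.coprime_iff_not_dvd Fact.out).mpr PN.not_dvd_index
    exact Nat.Coprime.coprime_dvd_right (Subgroup.index_dvd_of_le hle) hPNind
  -- fact 3
  have fact3 : ∀ x : X, p.Coprime (Nat.card (orbit N x)) →
      (P : Subgroup G) ≤ stabilizer G x := by
    intro x hx
    rw [cardN] at hx
    have hle : (PN : Subgroup N) ≤ stabilizer N x :=
      sylow_le_of_coprime_index PN hPNnormal _ hx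
    intro g hg
    have hmem : (⟨g, hPN hg⟩ : N) ∈ (PN : Subgroup N) := by
      rw [Sylow.coe_subtype]; exact hg
    exact (hle hmem : (⟨g, hPN hg⟩ : N) • x = x)
  -- fact 4
  have fact4 : ∀ x : X, p.Coprime (Nat.card (orbit G x)) →
      ∃ g : G, (P : Subgroup G) ≤ stabilizer G (g • x) := by
    intro x hx
    rw [cardG] at hx
    obtain ⟨R, hR⟩ := exists_sylow_le_of_coprime_index (stabilizer G x) hx
    obtain ⟨g, hg⟩ := MulAction.exists_smul_eq G R P
    refine ⟨g, ?_⟩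
    rw [← hg, Sylow.coe_subgroup_smul, stabilizer_smul_eq_stabilizer_map_conj]
    rw [Subgroup.pointwise_smul_def]
    exact Subgroup.map_mono hR
  -- fact 5: transitivity of N on P-fixed points within a G-orbit
  have fact5 : ∀ x y : X, (P : Subgroup G) ≤ stabilizer G x →
      (P : Subgroup G) ≤ stabilizer G y → (∃ g : G, g • x = y) → ∃ n : N, n • x = y := by
    rintro x y hx hy ⟨g, rfl⟩
    have hQ2 : ((g • P : Sylow p G) : Subgroup G) ≤ stabilizer G (g • x) := by
      intro k hk
      rw [Sylow.smul_def, Sylow.pointwise_smul_def] at hk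
      obtain ⟨q, hq, rfl⟩ := (Subgroup.mem_smul_pointwise_iff_exists _ _ _).mp hk
      have hqx : q • x = x := hx hq
      show (MulAut.conj g • q) • (g • x) = g • x
      simp [MulAut.smul_def, MulAut.conj_apply, mul_smul, hqx]
    set S := stabilizer G (g • x) with hS
    have hy' : (P : Subgroup G) ≤ S := hy
    obtain ⟨s, hs⟩ := MulAction.exists_smul_eq S ((g • P).subtype hQ2) (P.subtype hy')
    rw [Sylow.smul_subtype] at hs
    have hsmul : s • (g • P) = P := Sylow.subtype_injective hs
    rw [Subgroup.smul_def, ← mul_smul] at hsmul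
    have hmemN : ((s : G) * g) ∈ N := Sylow.smul_eq_iff_mem_normalizer.mp hsmul
    refine ⟨⟨(s : G) * g, hmemN⟩, ?_⟩
    show ((s : G) * g) • x = g • x
    rw [mul_smul]
    exact s.2
  -- the map on orbit quotients
  let π : orbitRel.Quotient N X → orbitRel.Quotient G X :=
    Quotient.map' id fun x y h => by
      obtain ⟨n, hn⟩ := h
      exact ⟨(n : G), hn⟩
  have hπmk : ∀ x : X, π (Quotient.mk'' x) = Quotient.mk'' x := fun x => rfl
  have hπ : ∀ ω : orbitRel.Quotient N X, p.Coprime (Nat.card ω.orbit) →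
      p.Coprime (Nat.card (π ω).orbit) := by
    intro ω
    induction ω using Quotient.inductionOn' with
    | h x =>
      rw [hπmk, orbitRel.Quotient.orbit_mk, orbitRel.Quotient.orbit_mk]
      exact fun h => fact1 x (fact3 x h)
  let f : {ω : orbitRel.Quotient N X // p.Coprime (Nat.card ω.orbit)} →
      {ω : orbitRel.Quotient G X // p.Coprime (Nat.card ω.orbit)} :=
    fun ω => ⟨π ω.1, hπ ω.1 ω.2⟩
  have hinj : Function.Injective f := by
    rintro ⟨ω1, h1⟩ ⟨ω2, h2⟩ hf
    simp only [f, Subtype.mk.injEq] at hf ⊢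
    revert h1 h2 hf
    induction ω1, ω2 using Quotient.inductionOn₂' with
    | h x y =>
      intro h1 h2 hf
      rw [orbitRel.Quotient.orbit_mk] at h1 h2
      rw [hπmk, hπmk] at hf
      have hxy : x ∈ orbit G y := Quotient.exact' hf
      obtain ⟨g, hg⟩ := hxy
      obtain ⟨n, hn⟩ := fact5 y x (fact3 y h2) (fact3 x h1) ⟨g, hg⟩
      exact Quotient.sound' (⟨n, hn⟩ : x ∈ orbit N y)
  have hsurj : Function.Surjective f := by
    rintro ⟨ω, hω⟩
    revert hω
    induction ω using Quotient.inductionOn' with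
    | h x =>
      intro hω
      rw [orbitRel.Quotient.orbit_mk] at hω
      obtain ⟨g, hg⟩ := fact4 x hω
      refine ⟨⟨Quotient.mk'' (g • x), ?_⟩, ?_⟩
      · rw [orbitRel.Quotient.orbit_mk]
        exact fact2 _ hg
      · simp only [f, Subtype.mk.injEq]
        rw [hπmk]
        exact Quotient.sound' ⟨g, rfl⟩
  exact (Nat.card_eq_of_bijective f ⟨hinj, hsurj⟩).symm
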